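/- For TCUE_N, the ordered eigen-angles θ_1 ≤ ... ≤ θ_N satisfy the index-translation invariance ⟨(θ_ℓ − θ_m)^q⟩ = ⟨θ_{ℓ−m}^q⟩ for all 1 ≤ m < ℓ ≤ N and every nonnegative integer q. -/

import Mathlib

open MeasureTheory Finset Real

open scoped Classical in
/-- Ordered TCUE joint density (including the `∏ dθ_j/(2π)` normalization):
`P^(ord)_N(θ) = (1/(N+1)) ∏_{i<j}|e^{iθ_i}-e^{iθ_j}|² ∏_j |1-e^{iθ_j}|²`
on the simplex `0 ≤ θ_1 ≤ ⋯ ≤ θ_N ≤ 2π`, with `N = n+1`. -/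
noncomputable def tcueOrderedDensity (n : ℕ) (θ : Fin (n + 1) → ℝ) : ℝ :=
  if (∀ i j : Fin (n + 1), i ≤ j → θ i ≤ θ j) ∧ (∀ i, θ i ∈ Set.Icc 0 (2 * π)) then
    (1 / (2 * π)) ^ (n + 1) * (1 / (n + 2) : ℝ) *
      (∏ i : Fin (n + 1), ∏ j : Fin (n + 1),
        if i < j then
          ‖Complex.exp (Complex.I * θ i) - Complex.exp (Complex.I * θ j)‖ ^ 2
        else 1) *
      ∏ j : Fin (n + 1), ‖1 - Complex.exp (Complex.I * θ j)‖ ^ 2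
  else 0

section TCUEAux

variable {n : ℕ}

def tcueRhoFun (n : ℕ) (b : Fin (n + 1)) (k : Fin (n + 1)) : Fin (n + 1) :=
  if h : k.val < n - b.val then ⟨k.val + b.val + 1, by have := b.isLt; omega⟩
  else if h2 : k.val = n - b.val then ⟨b.val, b.isLt⟩
  else ⟨k.val + b.val - n - 1, by have := b.isLt; have := k.isLt; omega⟩

lemma tcueRhoFun_inj (n : ℕ) (b : Fin (n + 1)) : Function.Injective (tcueRhoFun n b) := by
  intro k l h
  have hk := k.isLt; have hl := l.isLt; have hb := b.isLt
  have h' := congrArg Fin.val h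
  unfold tcueRhoFun at h'
  apply Fin.ext
  split_ifs at h' <;> simp only [Fin.val_mk] at h' <;> omega

noncomputable def tcueRho (n : ℕ) (b : Fin (n + 1)) : Equiv.Perm (Fin (n + 1)) :=
  Equiv.ofBijective _ (Finite.injective_iff_bijective.mp (tcueRhoFun_inj n b))

@[simp] lemma tcueRho_apply (b k : Fin (n + 1)) : tcueRho n b k = tcueRhoFun n b k := rfl

/-- The shifted-difference map. -/
noncomputable def tcueT (n : ℕ) (b : Fin (n + 1)) (θ : Fin (n + 1) → ℝ) : Fin (n + 1) → ℝ :=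
  fun k => (if tcueRhoFun n b k = b then -θ b else θ (tcueRhoFun n b k) - θ b)
    + (if k.val < n - b.val then 0 else 2 * π)

lemma tcueT_apply_lt (b : Fin (n + 1)) (θ : Fin (n + 1) → ℝ) (k : Fin (n + 1))
    (h : k.val < n - b.val) :
    tcueT n b θ k = θ ⟨k.val + b.val + 1, by have := b.isLt; omega⟩ - θ b := by
  have hb := b.isLt
  have hne : tcueRhoFun n b k ≠ b := by
    simp only [tcueRhoFun, dif_pos h]
    intro hc
    have := congrArg Fin.val hc
    simp at this; omega
  simp only [tcueT, if_neg hne, if_pos h, add_zero]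
  congr 1
  simp only [tcueRhoFun, dif_pos h]

lemma tcueT_apply_eq (b : Fin (n + 1)) (θ : Fin (n + 1) → ℝ) (k : Fin (n + 1))
    (h : k.val = n - b.val) :
    tcueT n b θ k = 2 * π - θ b := by
  have heq : tcueRhoFun n b k = b := by
    simp only [tcueRhoFun, dif_neg (by omega : ¬ k.val < n - b.val), dif_pos h]
  simp only [tcueT, if_pos heq, if_neg (by omega : ¬ k.val < n - b.val)]
  ring

lemma tcueT_apply_gt (b : Fin (n + 1)) (θ : Fin (n + 1) → ℝ) (k : Fin (n + 1))
    (h : n - b.val < k.val) :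
    tcueT n b θ k
      = 2 * π + θ ⟨k.val + b.val - n - 1, by have := b.isLt; have := k.isLt; omega⟩ - θ b := by
  have hb := b.isLt; have hk := k.isLt
  have hbpos : 0 < b.val := by omega
  have hne : tcueRhoFun n b k ≠ b := by
    simp only [tcueRhoFun, dif_neg (by omega : ¬ k.val < n - b.val), dif_neg (by omega : ¬ k.val = n - b.val)]
    intro hc
    have := congrArg Fin.val hc
    simp at this; omega
  simp only [tcueT, if_neg hne, if_neg (by omega : ¬ k.val < n - b.val)]
  have : tcueRhoFun n b k = ⟨k.val + b.val - n - 1, by omega⟩ := by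
    simp only [tcueRhoFun, dif_neg (by omega : ¬ k.val < n - b.val), dif_neg (by omega : ¬ k.val = n - b.val)]
  rw [this]; ring

noncomputable def tcueW (n : ℕ) (b : Fin (n + 1)) :
    (({i : Fin (n + 1) // i = b} → ℝ) × ({i : Fin (n + 1) // ¬ i = b} → ℝ)) ≃ᵐ
    (({i : Fin (n + 1) // i = b} → ℝ) × ({i : Fin (n + 1) // ¬ i = b} → ℝ)) where
  toFun p := (-p.1, p.2 - fun _ => p.1 ⟨b, rfl⟩)
  invFun p := (-p.1, p.2 - fun _ => p.1 ⟨b, rfl⟩)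
  left_inv p := by ext i <;> simp
  right_inv p := by ext i <;> simp
  measurable_toFun := by
    exact (measurable_fst.neg).prodMk (measurable_snd.sub
      (measurable_pi_lambda _ fun _ => (measurable_pi_apply _).comp measurable_fst))
  measurable_invFun := by
    exact (measurable_fst.neg).prodMk (measurable_snd.sub
      (measurable_pi_lambda _ fun _ => (measurable_pi_apply _).comp measurable_fst))

noncomputable def tcueC (n : ℕ) (b : Fin (n + 1)) : Fin (n + 1) → ℝ :=
  fun k => if k.val < n - b.val then 0 else 2 * π

open Classical in
noncomputable def tcueEquiv (n : ℕ) (b : Fin (n + 1)) :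
    (Fin (n + 1) → ℝ) ≃ᵐ (Fin (n + 1) → ℝ) :=
  (MeasurableEquiv.piEquivPiSubtypeProd (fun _ : Fin (n + 1) => ℝ) (· = b)).trans <|
    (tcueW n b).trans <|
      (MeasurableEquiv.piEquivPiSubtypeProd (fun _ : Fin (n + 1) => ℝ) (· = b)).symm.trans <|
        (MeasurableEquiv.piCongrLeft (fun _ : Fin (n + 1) => ℝ) (tcueRho n b).symm).trans <|
          MeasurableEquiv.addRight (tcueC n b)

lemma tcueEquiv_measurePreserving (b : Fin (n + 1)) :
    MeasurePreserving (tcueEquiv n b) volume volume := by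
  classical
  have h1 := volume_preserving_piEquivPiSubtypeProd (fun _ : Fin (n + 1) => ℝ) (· = b)
  have h4 : MeasurePreserving (MeasurableEquiv.addRight (tcueC n b)) volume volume :=
    measurePreserving_add_right volume (tcueC n b)
  have h3 := volume_measurePreserving_piCongrLeft (fun _ : Fin (n + 1) => ℝ) (tcueRho n b).symm
  refine ((((h4.comp h3).comp h1.symm).comp ?_).comp h1)
  · rw [Measure.volume_eq_prod]
    refine MeasurePreserving.skew_product
      (g := fun (t : {i : Fin (n+1) // i = b} → ℝ) (x : {i : Fin (n+1) // ¬ i = b} → ℝ) => x - fun _ => t ⟨b, rfl⟩)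
      (Measure.measurePreserving_neg _) ?_ (Filter.Eventually.of_forall fun t => ?_)
    · exact measurable_snd.sub
        (measurable_pi_lambda _ fun _ => (measurable_pi_apply _).comp measurable_fst)
    · have : ((fun t (x : {i : Fin (n + 1) // ¬ i = b} → ℝ) => x - fun _ => t ⟨b, rfl⟩) t)
          = (· + -(fun _ => t ⟨b, rfl⟩)) := by funext x; simp [sub_eq_add_neg]
      rw [show (fun x : {i : Fin (n + 1) // ¬ i = b} → ℝ => x - fun _ => t ⟨b, rfl⟩) = (· + -(fun _ => t ⟨b, rfl⟩)) from this]
      exact (measurePreserving_add_right _ _).map_eq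

lemma tcueEquiv_coe (b : Fin (n + 1)) (θ : Fin (n + 1) → ℝ) :
    tcueEquiv n b θ = tcueT n b θ := by
  classical
  funext k
  show (MeasurableEquiv.addRight (tcueC n b))
      ((MeasurableEquiv.piCongrLeft (fun _ : Fin (n + 1) => ℝ) (tcueRho n b).symm)
        ((MeasurableEquiv.piEquivPiSubtypeProd (fun _ : Fin (n + 1) => ℝ) (· = b)).symm
          ((tcueW n b)
            ((MeasurableEquiv.piEquivPiSubtypeProd (fun _ : Fin (n + 1) => ℝ) (· = b)) θ)))) k
      = tcueT n b θ k
  have hpc : ∀ (x : Fin (n + 1) → ℝ) (k : Fin (n + 1)),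
      (MeasurableEquiv.piCongrLeft (fun _ : Fin (n + 1) => ℝ) (tcueRho n b).symm) x k
        = x (tcueRho n b k) := by
    intro x k
    conv_lhs => rw [← Equiv.symm_apply_apply (tcueRho n b) k]
    exact MeasurableEquiv.piCongrLeft_apply_apply (β := fun _ : Fin (n + 1) => ℝ)
      (tcueRho n b).symm x (tcueRho n b k)
  rw [show ∀ y : Fin (n+1) → ℝ, (MeasurableEquiv.addRight (tcueC n b)) y = y + tcueC n b from fun _ => rfl]
  simp only [Pi.add_apply, hpc]
  rw [show (tcueRho n b k) = tcueRhoFun n b k from rfl]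
  simp only [MeasurableEquiv.piEquivPiSubtypeProd, MeasurableEquiv.symm,
    MeasurableEquiv.coe_mk, Equiv.piEquivPiSubtypeProd, Equiv.coe_fn_mk, Equiv.coe_fn_symm_mk,
    tcueW, Equiv.symm, Equiv.coe_fn_mk]
  by_cases hbb : tcueRhoFun n b k = b
  · simp only [dif_pos hbb, tcueT, if_pos hbb, tcueC, Pi.neg_apply]
    rw [hbb]
  · simp only [dif_neg hbb, tcueT, if_neg hbb, tcueC, Pi.sub_apply]

/-- Squared pair product over all ordered pairs. -/
lemma tcue_sq_pair_prod {N : ℕ} (g : Fin N → Fin N → ℝ) (hsymm : ∀ k l, g k l = g l k) :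
    (∏ k : Fin N, ∏ l : Fin N, if k < l then g k l else 1) ^ 2
      = ∏ k : Fin N, ∏ l : Fin N, if k ≠ l then g k l else 1 := by
  rw [sq]
  nth_rewrite 2 [Finset.prod_comm]
  rw [← Finset.prod_mul_distrib]
  refine Finset.prod_congr rfl fun k _ => ?_
  rw [← Finset.prod_mul_distrib]
  refine Finset.prod_congr rfl fun l _ => ?_
  rcases lt_trichotomy k l with h | h | h
  · simp [h, not_lt_of_gt h, h.ne, hsymm]
  · simp [h]
  · simp [h, not_lt_of_gt h, h.ne', hsymm k l]

lemma tcue_pair_prod_nonneg {N : ℕ} (w : Fin N → ℂ) :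
    0 ≤ ∏ k : Fin N, ∏ l : Fin N, if k < l then ‖w k - w l‖ ^ 2 else 1 :=
  Finset.prod_nonneg fun k _ => Finset.prod_nonneg fun l _ => by
    split_ifs
    · positivity
    · norm_num

/-- Rotating by a unimodular constant and permuting the points leaves the pair product
unchanged. -/
lemma tcue_pair_prod_perm {N : ℕ} (w : Fin N → ℂ) (c : ℂ) (hc : ‖c‖ = 1)
    (σ : Equiv.Perm (Fin N)) :
    (∏ k : Fin N, ∏ l : Fin N, if k < l then ‖c * w (σ k) - c * w (σ l)‖ ^ 2 else 1)
      = ∏ k : Fin N, ∏ l : Fin N, if k < l then ‖w k - w l‖ ^ 2 else 1 := by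
  have habs : ∀ k l : Fin N, ‖c * w (σ k) - c * w (σ l)‖ = ‖w (σ k) - w (σ l)‖ := by
    intro k l
    rw [← mul_sub, norm_mul, hc, one_mul]
  have hL : ∀ k l : Fin N, ‖c * w (σ k) - c * w (σ l)‖ ^ 2
      = ‖w (σ k) - w (σ l)‖ ^ 2 := fun k l => by rw [habs]
  simp only [hL]
  have h1 : (∏ k : Fin N, ∏ l : Fin N, if k < l then ‖w (σ k) - w (σ l)‖ ^ 2 else 1) ^ 2
      = (∏ k : Fin N, ∏ l : Fin N, if k < l then ‖w k - w l‖ ^ 2 else 1) ^ 2 := by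
    rw [tcue_sq_pair_prod _ (fun k l => by rw [norm_sub_rev]),
      tcue_sq_pair_prod _ (fun k l => by rw [norm_sub_rev])]
    rw [← Equiv.prod_comp σ (fun k => ∏ l : Fin N, if k ≠ l then ‖w k - w l‖ ^ 2 else 1)]
    refine Finset.prod_congr rfl fun k _ => ?_
    rw [← Equiv.prod_comp σ (fun l => if σ k ≠ l then ‖w (σ k) - w l‖ ^ 2 else 1)]
    refine Finset.prod_congr rfl fun l _ => ?_
    simp [EmbeddingLike.apply_eq_iff_eq]
  have hn1 := tcue_pair_prod_nonneg (fun k => w (σ k))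
  have hn2 := tcue_pair_prod_nonneg w
  nlinarith [h1, hn1, hn2]

noncomputable def tcueZ (n : ℕ) (θ : Fin (n + 1) → ℝ) : Fin (n + 2) → ℂ :=
  fun k => if h : k.val = 0 then 1
    else Complex.exp (Complex.I * θ ⟨k.val - 1, by have := k.isLt; omega⟩)

lemma tcueZ_zero (θ : Fin (n + 1) → ℝ) : tcueZ n θ 0 = 1 := rfl

lemma tcueZ_succ (θ : Fin (n + 1) → ℝ) (j : Fin (n + 1)) :
    tcueZ n θ j.succ = Complex.exp (Complex.I * θ j) := by
  simp only [tcueZ, Fin.val_succ, Nat.succ_ne_zero, dif_neg, not_false_iff]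
  norm_num

def tcueSigma (n : ℕ) (b : Fin (n + 1)) : Equiv.Perm (Fin (n + 2)) :=
  Equiv.addRight (⟨b.val + 1, by have := b.isLt; omega⟩ : Fin (n + 2))

lemma tcueSigma_val (b : Fin (n + 1)) (k : Fin (n + 2)) :
    (tcueSigma n b k).val = (k.val + b.val + 1) % (n + 2) := by
  simp [tcueSigma, Fin.add_def, Nat.add_assoc]

lemma tcueZ_tcueT (b : Fin (n + 1)) (θ : Fin (n + 1) → ℝ) (k : Fin (n + 2)) :
    tcueZ n (tcueT n b θ) k
      = Complex.exp (-(Complex.I * θ b)) * tcueZ n θ (tcueSigma n b k) := by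
  have hb := b.isLt; have hk := k.isLt
  have hσlt := (tcueSigma n b k).isLt
  have hexp1 : ∀ x y : ℝ, Complex.exp (Complex.I * ((x - y : ℝ) : ℂ))
      = Complex.exp (-(Complex.I * y)) * Complex.exp (Complex.I * x) := by
    intro x y; rw [← Complex.exp_add]; congr 1; push_cast; ring
  have hexp2 : ∀ x y : ℝ, Complex.exp (Complex.I * ((2 * π + x - y : ℝ) : ℂ))
      = Complex.exp (-(Complex.I * y)) * Complex.exp (Complex.I * x) := by
    intro x y
    rw [show Complex.I * ((2 * π + x - y : ℝ) : ℂ)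
        = 2 * π * Complex.I + (-(Complex.I * (y : ℂ)) + Complex.I * (x : ℂ)) by push_cast; ring,
      Complex.exp_add, Complex.exp_two_pi_mul_I, one_mul, Complex.exp_add]
  have hexp3 : ∀ y : ℝ, Complex.exp (Complex.I * ((2 * π - y : ℝ) : ℂ))
      = Complex.exp (-(Complex.I * y)) := by
    intro y
    rw [show Complex.I * ((2 * π - y : ℝ) : ℂ)
        = 2 * π * Complex.I + -(Complex.I * (y : ℂ)) by push_cast; ring,
      Complex.exp_add, Complex.exp_two_pi_mul_I, one_mul]
  rcases Nat.eq_zero_or_pos k.val with h0 | hpos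
  · have hσ : (tcueSigma n b k).val = b.val + 1 := by
      rw [tcueSigma_val, h0, Nat.zero_add, Nat.mod_eq_of_lt (by omega)]
    rw [show tcueZ n (tcueT n b θ) k = 1 from dif_pos h0]
    rw [show tcueZ n θ (tcueSigma n b k)
        = Complex.exp (Complex.I * θ ⟨(tcueSigma n b k).val - 1, by omega⟩) from
      dif_neg (by omega)]
    rw [← Complex.exp_add]
    have : (⟨(tcueSigma n b k).val - 1, by omega⟩ : Fin (n+1)) = b := by
      apply Fin.ext; simp [hσ]
    rw [this, neg_add_cancel, Complex.exp_zero]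
  · have hkv : tcueZ n (tcueT n b θ) k
        = Complex.exp (Complex.I * (tcueT n b θ ⟨k.val - 1, by omega⟩)) :=
      dif_neg (by omega)
    rw [hkv]
    set m : Fin (n + 1) := ⟨k.val - 1, by omega⟩ with hm
    have hmv : m.val = k.val - 1 := rfl
    rcases lt_trichotomy (m.val) (n - b.val) with h | h | h
    · rw [tcueT_apply_lt b θ m h, hexp1]
      have hσ : (tcueSigma n b k).val = m.val + b.val + 2 := by
        rw [tcueSigma_val]; simp only [hm]
        rw [Nat.mod_eq_of_lt (by omega)]; omega
      rw [show tcueZ n θ (tcueSigma n b k)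
          = Complex.exp (Complex.I * θ ⟨(tcueSigma n b k).val - 1, by omega⟩) from
        dif_neg (by omega)]
      congr 3
      norm_cast
      congr 1
      apply Fin.ext; simp [hσ]
    · rw [tcueT_apply_eq b θ m h, hexp3]
      have hσ : (tcueSigma n b k).val = 0 := by
        rw [tcueSigma_val]
        have : k.val + b.val + 1 = n + 2 := by omega
        rw [this]; simp
      rw [show tcueZ n θ (tcueSigma n b k) = 1 from dif_pos hσ, mul_one]
    · rw [tcueT_apply_gt b θ m h, hexp2]
      have hσ : (tcueSigma n b k).val = m.val + b.val - n := by
        rw [tcueSigma_val]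
        have h2 : k.val + b.val + 1 = (m.val + b.val - n) + (n + 2) := by omega
        rw [h2, Nat.add_mod_right, Nat.mod_eq_of_lt (by omega)]
      rw [show tcueZ n θ (tcueSigma n b k)
          = Complex.exp (Complex.I * θ ⟨(tcueSigma n b k).val - 1, by omega⟩) from
        dif_neg (by omega)]
      congr 3
      norm_cast
      congr 1
      apply Fin.ext; simp [hσ]


/-- The full pair product, including the extra point at angle `0`. -/
noncomputable def tcueF (n : ℕ) (θ : Fin (n + 1) → ℝ) : ℝ :=
  ∏ k : Fin (n + 2), ∏ l : Fin (n + 2),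
    if k < l then ‖tcueZ n θ k - tcueZ n θ l‖ ^ 2 else 1

/-- The product part of the TCUE density equals the full pair product. -/
lemma tcueF_eq (θ : Fin (n + 1) → ℝ) :
    tcueF n θ = (∏ i : Fin (n + 1), ∏ j : Fin (n + 1),
        if i < j then
          ‖Complex.exp (Complex.I * θ i) - Complex.exp (Complex.I * θ j)‖ ^ 2
        else 1) *
      ∏ j : Fin (n + 1), ‖1 - Complex.exp (Complex.I * θ j)‖ ^ 2 := by
  rw [tcueF, Fin.prod_univ_succ]
  rw [Fin.prod_univ_succ]
  have h0 : ¬ ((0 : Fin (n+2)) < 0) := lt_irrefl _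
  rw [if_neg h0, one_mul]
  have h1 : ∀ j : Fin (n+1), (0 : Fin (n+2)) < j.succ := fun j => Fin.succ_pos j
  have h2 : ∀ i : Fin (n+1), ¬ (i.succ < (0 : Fin (n+2))) := fun i => Fin.not_lt_zero _
  simp only [if_pos (h1 _), tcueZ_zero, tcueZ_succ]
  have h3 : ∀ i : Fin (n+1), (∏ l : Fin (n + 2),
      if i.succ < l then ‖Complex.exp (Complex.I * θ i) - tcueZ n θ l‖ ^ 2 else 1)
      = ∏ j : Fin (n + 1),
        if i < j then
          ‖Complex.exp (Complex.I * θ i) - Complex.exp (Complex.I * θ j)‖ ^ 2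
        else 1 := by
    intro i
    rw [Fin.prod_univ_succ, if_neg (h2 i), one_mul]
    simp only [tcueZ_succ, Fin.succ_lt_succ_iff]
  simp only [h3]
  rw [mul_comm]

lemma tcueF_tcueT (b : Fin (n + 1)) (θ : Fin (n + 1) → ℝ) :
    tcueF n (tcueT n b θ) = tcueF n θ := by
  have hc : ‖Complex.exp (-(Complex.I * θ b))‖ = 1 := by
    rw [Complex.norm_exp]
    simp
  have := tcue_pair_prod_perm (tcueZ n θ) (Complex.exp (-(Complex.I * θ b))) hc (tcueSigma n b)
  rw [tcueF]
  simp only [tcueZ_tcueT]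
  rw [this, tcueF]

def tcueCond (n : ℕ) (θ : Fin (n + 1) → ℝ) : Prop :=
  (∀ i j : Fin (n + 1), i ≤ j → θ i ≤ θ j) ∧ (∀ i, θ i ∈ Set.Icc 0 (2 * π))

lemma tcueCond_of (b : Fin (n + 1)) (θ : Fin (n + 1) → ℝ) (h : tcueCond n θ) :
    tcueCond n (tcueT n b θ) := by
  obtain ⟨hm, hb⟩ := h
  have hb' : ∀ i, 0 ≤ θ i ∧ θ i ≤ 2 * π := fun i => ⟨(hb i).1, (hb i).2⟩
  have hbb := b.isLt
  have hm' : ∀ i j : Fin (n + 1), i.val ≤ j.val → θ i ≤ θ j := fun i j hij => hm i j hij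
  constructor
  · intro k l hkl
    have hkl' : k.val ≤ l.val := hkl
    have hk := k.isLt; have hl := l.isLt
    rcases lt_trichotomy k.val (n - b.val) with hk1 | hk1 | hk1 <;>
      rcases lt_trichotomy l.val (n - b.val) with hl1 | hl1 | hl1
    · rw [tcueT_apply_lt b θ k hk1, tcueT_apply_lt b θ l hl1]
      have := hm' ⟨k.val + b.val + 1, by omega⟩ ⟨l.val + b.val + 1, by omega⟩ (by simp only [Fin.mk_le_mk, Fin.le_def, Fin.val_mk]; omega)
      linarith
    · rw [tcueT_apply_lt b θ k hk1, tcueT_apply_eq b θ l hl1]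
      have := (hb' ⟨k.val + b.val + 1, by omega⟩).2
      linarith
    · rw [tcueT_apply_lt b θ k hk1, tcueT_apply_gt b θ l hl1]
      have h1 := (hb' ⟨k.val + b.val + 1, by omega⟩).2
      have h2 := (hb' ⟨l.val + b.val - n - 1, by omega⟩).1
      linarith
    · omega
    · rw [tcueT_apply_eq b θ k hk1, tcueT_apply_eq b θ l hl1]
    · rw [tcueT_apply_eq b θ k hk1, tcueT_apply_gt b θ l hl1]
      have := (hb' ⟨l.val + b.val - n - 1, by omega⟩).1
      linarith
    · omega
    · omega
    · rw [tcueT_apply_gt b θ k hk1, tcueT_apply_gt b θ l hl1]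
      have := hm' ⟨k.val + b.val - n - 1, by omega⟩ ⟨l.val + b.val - n - 1, by omega⟩
        (by simp only [Fin.mk_le_mk, Fin.le_def, Fin.val_mk]; omega)
      linarith
  · intro k
    have hk := k.isLt
    have hbb2 := hb' b
    rcases lt_trichotomy k.val (n - b.val) with hk1 | hk1 | hk1
    · rw [tcueT_apply_lt b θ k hk1]
      have h1 := hm' b ⟨k.val + b.val + 1, by omega⟩ (by simp only [Fin.mk_le_mk, Fin.le_def, Fin.val_mk]; omega)
      have h2 := (hb' ⟨k.val + b.val + 1, by omega⟩).2
      constructor <;> [linarith; linarith]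
    · rw [tcueT_apply_eq b θ k hk1]
      constructor <;> [linarith [hbb2.2]; linarith [hbb2.1]]
    · rw [tcueT_apply_gt b θ k hk1]
      have h1 := (hb' ⟨k.val + b.val - n - 1, by omega⟩).1
      have h2 := hm' ⟨k.val + b.val - n - 1, by omega⟩ b (by simp only [Fin.mk_le_mk, Fin.le_def, Fin.val_mk]; omega)
      constructor <;> [linarith; linarith]

lemma tcueCond_to (b : Fin (n + 1)) (θ : Fin (n + 1) → ℝ) (h : tcueCond n (tcueT n b θ)) :
    tcueCond n θ := by
  obtain ⟨Hm, Hb⟩ := h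
  have hbb := b.isLt
  have Hm' : ∀ i j : Fin (n + 1), i.val ≤ j.val → tcueT n b θ i ≤ tcueT n b θ j :=
    fun i j hij => Hm i j hij
  have Hb' : ∀ i, 0 ≤ tcueT n b θ i ∧ tcueT n b θ i ≤ 2 * π := fun i => ⟨(Hb i).1, (Hb i).2⟩
  have E1 : tcueT n b θ ⟨n - b.val, by omega⟩ = 2 * π - θ b :=
    tcueT_apply_eq b θ _ rfl
  have E2 : ∀ (j : Fin (n + 1)) (hj : b.val < j.val),
      tcueT n b θ ⟨j.val - b.val - 1, by have := j.isLt; omega⟩ = θ j - θ b := by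
    intro j hj
    have hjlt := j.isLt
    rw [tcueT_apply_lt b θ _ (by simp only [Fin.mk_le_mk, Fin.le_def, Fin.val_mk]; omega)]
    congr 2
    apply Fin.ext; simp only [Fin.val_mk]; omega
  have E3 : ∀ (j : Fin (n + 1)) (hj : j.val < b.val),
      tcueT n b θ ⟨j.val + n - b.val + 1, by have := j.isLt; omega⟩ = 2 * π + θ j - θ b := by
    intro j hj
    have hjlt := j.isLt
    rw [tcueT_apply_gt b θ _ (by simp only [Fin.mk_le_mk, Fin.le_def, Fin.val_mk]; omega)]
    congr 2
    congr 1
    apply Fin.ext; simp only [Fin.val_mk]; omega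
  have hbval : 0 ≤ θ b ∧ θ b ≤ 2 * π := by
    have := Hb' ⟨n - b.val, by omega⟩
    rw [E1] at this
    constructor <;> linarith [this.1, this.2]
  have hgt : ∀ j : Fin (n + 1), b.val < j.val → θ b ≤ θ j ∧ θ j ≤ 2 * π := by
    intro j hj
    have hjlt := j.isLt
    have h1 := Hb' ⟨j.val - b.val - 1, by omega⟩
    rw [E2 j hj] at h1
    have h2 := Hm' ⟨j.val - b.val - 1, by omega⟩ ⟨n - b.val, by omega⟩ (by simp only [Fin.mk_le_mk, Fin.le_def, Fin.val_mk]; omega)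
    rw [E2 j hj, E1] at h2
    constructor <;> linarith [h1.1]
  have hlt : ∀ j : Fin (n + 1), j.val < b.val → 0 ≤ θ j ∧ θ j ≤ θ b := by
    intro j hj
    have hjlt := j.isLt
    have h1 := Hb' ⟨j.val + n - b.val + 1, by omega⟩
    rw [E3 j hj] at h1
    have h2 := Hm' ⟨n - b.val, by omega⟩ ⟨j.val + n - b.val + 1, by omega⟩ (by simp only [Fin.mk_le_mk, Fin.le_def, Fin.val_mk]; omega)
    rw [E3 j hj, E1] at h2
    constructor <;> linarith [h1.2]
  constructor
  · intro i j hij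
    have hij' : i.val ≤ j.val := hij
    have hi := i.isLt; have hj := j.isLt
    rcases lt_trichotomy i.val b.val with hi1 | hi1 | hi1 <;>
      rcases lt_trichotomy j.val b.val with hj1 | hj1 | hj1
    · have h2 := Hm' ⟨i.val + n - b.val + 1, by omega⟩ ⟨j.val + n - b.val + 1, by omega⟩
        (by simp only [Fin.mk_le_mk, Fin.le_def, Fin.val_mk]; omega)
      rw [E3 i hi1, E3 j hj1] at h2
      linarith
    · have : j = b := Fin.ext hj1
      subst this
      exact (hlt i hi1).2
    · linarith [(hlt i hi1).2, (hgt j hj1).1]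
    · omega
    · have : i = b := Fin.ext hi1; have : j = b := Fin.ext hj1
      have hib : i = b := Fin.ext hi1
      have hjb : j = b := Fin.ext hj1
      rw [hib, hjb]
    · have hib : i = b := Fin.ext hi1
      rw [hib]
      exact (hgt j hj1).1
    · omega
    · omega
    · have h2 := Hm' ⟨i.val - b.val - 1, by omega⟩ ⟨j.val - b.val - 1, by omega⟩
        (by simp only [Fin.mk_le_mk, Fin.le_def, Fin.val_mk]; omega)
      rw [E2 i hi1, E2 j hj1] at h2
      linarith
  · intro j
    have hj := j.isLt
    rcases lt_trichotomy j.val b.val with hj1 | hj1 | hj1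
    · exact ⟨(hlt j hj1).1, by linarith [(hlt j hj1).2, hbval.2]⟩
    · have hjb : j = b := Fin.ext hj1
      rw [hjb]; exact ⟨hbval.1, hbval.2⟩
    · exact ⟨by linarith [(hgt j hj1).1, hbval.1], (hgt j hj1).2⟩

end TCUEAux


lemma tcueDensity_tcueT {n : ℕ} (b : Fin (n + 1)) (θ : Fin (n + 1) → ℝ) :
    tcueOrderedDensity n (tcueT n b θ) = tcueOrderedDensity n θ := by
  by_cases h : tcueCond n θ
  · have h' : tcueCond n (tcueT n b θ) := tcueCond_of b θ h
    unfold tcueCond at h h'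
    unfold tcueOrderedDensity
    rw [if_pos h', if_pos h]
    have hkey : tcueF n (tcueT n b θ) = tcueF n θ := tcueF_tcueT b θ
    rw [tcueF_eq, tcueF_eq] at hkey
    linear_combination ((1 / (2 * π)) ^ (n + 1) * (1 / (n + 2) : ℝ)) * hkey
  · have h' : ¬ tcueCond n (tcueT n b θ) := fun hc => h (tcueCond_to b θ hc)
    unfold tcueCond at h h'
    unfold tcueOrderedDensity
    rw [if_neg h', if_neg h]

/-- Index-translation invariance in TCUE: for ordered eigen-angles
`θ_1 ≤ ⋯ ≤ θ_N` (zero-based indices `b < a` here, so `θ_ℓ = θ (ℓ-1)`),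
`⟨(θ_ℓ - θ_m)^q⟩ = ⟨θ_{ℓ-m}^q⟩` for all `1 ≤ m < ℓ ≤ N` and every `q : ℕ`. -/
theorem tcue_index_translation_invariance
    (n : ℕ) (a b : Fin (n + 1)) (hab : b < a) (q : ℕ) :
    ∫ θ : Fin (n + 1) → ℝ, (θ a - θ b) ^ q * tcueOrderedDensity n θ
      = ∫ θ : Fin (n + 1) → ℝ,
          (θ ⟨a.val - b.val - 1, by omega⟩) ^ q * tcueOrderedDensity n θ := by
  have hab' : b.val < a.val := hab
  have ha := a.isLt
  have key : ∀ θ : Fin (n + 1) → ℝ,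
      (tcueEquiv n b θ) ⟨a.val - b.val - 1, by omega⟩ ^ q
          * tcueOrderedDensity n (tcueEquiv n b θ)
        = (θ a - θ b) ^ q * tcueOrderedDensity n θ := by
    intro θ
    rw [tcueEquiv_coe, tcueDensity_tcueT]
    congr 2
    rw [tcueT_apply_lt b θ _ (by simp only [Fin.val_mk]; omega)]
    congr 2
    congr 1
    simp only [Fin.val_mk]
    omega
  rw [← (tcueEquiv_measurePreserving b).integral_comp'
    (fun x : Fin (n + 1) → ℝ => x ⟨a.val - b.val - 1, by omega⟩ ^ q * tcueOrderedDensity n x)]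
  congr 1
  funext θ
  exact (key θ).symm
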